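/- Let V be a 2n-dimensional complex symplectic vector space with symplectic form [·,·], and let x ⊂ V be a Lagrangian subspace (x = x^⊥). Let G_• and H_• be complete flags in V with G_i = H_{2n-i}^⊥ for all i. Then for every 0 ≤ i ≤ 2n-1, (dim(x ∩ G_{i+1}) - dim(x ∩ G_i)) + (dim(x ∩ H_{2n-i}) - dim(x ∩ H_{2n-i-1})) = 1. -/

import Mathlib

open Module

section Aux

variable {V : Type*} [AddCommGroup V] [Module ℂ V] [FiniteDimensional ℂ V]

lemma aux_orthogonal_sup (B : LinearMap.BilinForm ℂ V) (W U : Submodule ℂ V) :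
    B.orthogonal (W ⊔ U) = B.orthogonal W ⊓ B.orthogonal U := by
  ext v
  simp only [Submodule.mem_inf, LinearMap.BilinForm.mem_orthogonal_iff]
  constructor
  · intro h
    exact ⟨fun w hw => h w (Submodule.mem_sup_left hw),
           fun u hu => h u (Submodule.mem_sup_right hu)⟩
  · rintro ⟨h1, h2⟩ m hm
    obtain ⟨w, hw, u, hu, rfl⟩ := Submodule.mem_sup.1 hm
    have e1 := h1 w hw
    have e2 := h2 u hu
    simp [e1, e2]

/-- Key dimension identity for a Lagrangian `x`. -/
lemma aux_key (B : LinearMap.BilinForm ℂ V) (hB : B.Nondegenerate) (hrefl : B.IsRefl)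
    (x : Submodule ℂ V) (hx : x = B.orthogonal x) (A : Submodule ℂ V) :
    finrank ℂ (x ⊓ B.orthogonal A : Submodule ℂ V) + finrank ℂ A
      = finrank ℂ (x ⊓ A : Submodule ℂ V) + finrank ℂ x := by
  have hsup : x ⊓ B.orthogonal A = B.orthogonal (x ⊔ A) := by
    rw [aux_orthogonal_sup, ← hx]
  have h1 : finrank ℂ (B.orthogonal (x ⊔ A)) = finrank ℂ V - finrank ℂ (x ⊔ A : Submodule ℂ V) :=
    LinearMap.BilinForm.finrank_orthogonal hB _
  have h2 : finrank ℂ (x ⊔ A : Submodule ℂ V) + finrank ℂ (x ⊓ A : Submodule ℂ V)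
      = finrank ℂ x + finrank ℂ A := Submodule.finrank_sup_add_finrank_inf_eq x A
  have h3 : finrank ℂ (x ⊔ A : Submodule ℂ V) ≤ finrank ℂ V := Submodule.finrank_le _
  have hxr : finrank ℂ x + finrank ℂ (B.orthogonal x) = finrank ℂ V := by
    have := LinearMap.BilinForm.finrank_orthogonal hB x
    have hle : finrank ℂ x ≤ finrank ℂ V := Submodule.finrank_le _
    omega
  rw [hsup, h1]
  rw [← hx] at hxr
  omega

end Aux

/-- Let `V` be a `2n`-dimensional complex symplectic vector space and `x` a
Lagrangian subspace (`x = x^⊥`). If `G_•` and `H_•` are complete flags with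
`G_i = H_{2n-i}^⊥`, then for every `0 ≤ i ≤ 2n-1`,
`(dim(x ∩ G_{i+1}) - dim(x ∩ G_i)) + (dim(x ∩ H_{2n-i}) - dim(x ∩ H_{2n-i-1})) = 1`. -/
theorem lagrangian_flag_dimension_identity (n : ℕ) (V : Type*) [AddCommGroup V]
    [Module ℂ V] [FiniteDimensional ℂ V]
    (B : LinearMap.BilinForm ℂ V) (hB : B.Nondegenerate) (halt : ∀ v, B v v = 0)
    (hdim : Module.finrank ℂ V = 2 * n)
    (G H : ℕ → Submodule ℂ V)
    (hGdim : ∀ i ≤ 2 * n, Module.finrank ℂ (G i) = i)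
    (hHdim : ∀ i ≤ 2 * n, Module.finrank ℂ (H i) = i)
    (hGmono : ∀ i j, i ≤ j → j ≤ 2 * n → G i ≤ G j)
    (hHmono : ∀ i j, i ≤ j → j ≤ 2 * n → H i ≤ H j)
    (hGH : ∀ i ≤ 2 * n, G i = B.orthogonal (H (2 * n - i)))
    (x : Submodule ℂ V) (hx : x = B.orthogonal x) :
    ∀ i < 2 * n,
      (Module.finrank ℂ ↥(x ⊓ G (i + 1)) - Module.finrank ℂ ↥(x ⊓ G i)) +
        (Module.finrank ℂ ↥(x ⊓ H (2 * n - i)) -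
          Module.finrank ℂ ↥(x ⊓ H (2 * n - i - 1))) = 1 := by
  intro i hi
  have hrefl : B.IsRefl := LinearMap.IsAlt.isRefl halt
  -- x has dimension n
  have hxn : finrank ℂ x = n := by
    have h1 := LinearMap.BilinForm.finrank_orthogonal hB x
    rw [← hx, hdim] at h1
    have h2 : finrank ℂ x ≤ 2 * n := hdim ▸ Submodule.finrank_le x
    omega
  -- key identities
  have key1 := aux_key B hB hrefl x hx (H (2 * n - i))
  have key2 := aux_key B hB hrefl x hx (H (2 * n - i - 1))
  rw [← hGH i (le_of_lt hi)] at key1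
  have hGi1 : G (i + 1) = B.orthogonal (H (2 * n - i - 1)) := by
    have := hGH (i + 1) hi
    rwa [show 2 * n - (i + 1) = 2 * n - i - 1 by omega] at this
  rw [← hGi1] at key2
  rw [hHdim (2 * n - i) (by omega)] at key1
  rw [hHdim (2 * n - i - 1) (by omega)] at key2
  rw [hxn] at key1 key2
  -- monotonicity facts
  have hGle : G i ≤ G (i + 1) := hGmono i (i + 1) (by omega) hi
  have hab : finrank ℂ ↥(x ⊓ G i) ≤ finrank ℂ ↥(x ⊓ G (i + 1)) :=
    Submodule.finrank_mono (inf_le_inf_left x hGle)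
  have hcd : finrank ℂ ↥(x ⊓ H (2 * n - i - 1)) ≤ finrank ℂ ↥(x ⊓ H (2 * n - i)) :=
    Submodule.finrank_mono (inf_le_inf_left x
      (hHmono (2 * n - i - 1) (2 * n - i) (by omega) (by omega)))
  -- jump of at most one
  have hjump : finrank ℂ ↥(x ⊓ G (i + 1)) ≤ finrank ℂ ↥(x ⊓ G i) + 1 := by
    have hsi := Submodule.finrank_sup_add_finrank_inf_eq (x ⊓ G (i + 1)) (G i)
    have hinf : (x ⊓ G (i + 1)) ⊓ G i = x ⊓ G i := by
      rw [inf_assoc, inf_eq_right.mpr hGle]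
    have hsub : (x ⊓ G (i + 1)) ⊔ G i ≤ G (i + 1) := sup_le inf_le_right hGle
    have hsle : finrank ℂ ↥((x ⊓ G (i + 1)) ⊔ G i) ≤ i + 1 := by
      have := Submodule.finrank_mono hsub
      rwa [hGdim (i + 1) hi] at this
    rw [hinf, hGdim i (by omega)] at hsi
    omega
  omega
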